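/- arXiv:1706.08651 — 5 statements merged into one kernel-verified Lean document; each statement's English description precedes it below -/
import Mathlib

section
/- Let $X$ be a separable topological algebra over $\mathbb{K}$ that is a Baire space and has a countable base of open sets. Then the set of sequences $f = (f_n)_{n\in\mathbb{N}} \in X^{\mathbb{N}}$ (with the product topology) such that the subalgebra generated by $\{f_n : n \in \mathbb{N}\}$ is dense in $X$ is a dense $G_\delta$ (hence residual) subset of $X^{\mathbb{N}}$. -/
open TopologicalSpace

lemma aux_open {𝕂 X : Type*} [RCLike 𝕂] [CommRing X] [Algebra 𝕂 X]
    [TopologicalSpace X] [IsTopologicalRing X] [ContinuousSMul 𝕂 X]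
    (U : Set X) (hU : IsOpen U) :
    IsOpen {f : ℕ → X |
      (U ∩ ((NonUnitalAlgebra.adjoin 𝕂 (Set.range f) : NonUnitalSubalgebra 𝕂 X) : Set X)).Nonempty} := by
  rw [isOpen_iff_forall_mem_open]
  rintro f ⟨x, hxU, hx⟩
  have key : ∀ y, y ∈ NonUnitalAlgebra.adjoin 𝕂 (Set.range f) →
      ∃ Φ : (ℕ → X) → X, Continuous Φ ∧ Φ f = y ∧
      ∀ g : ℕ → X, Φ g ∈ NonUnitalAlgebra.adjoin 𝕂 (Set.range g) := by
    intro y hy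
    induction hy using NonUnitalAlgebra.adjoin_induction with
    | mem y hy =>
      obtain ⟨n, rfl⟩ := hy
      exact ⟨fun g => g n, continuous_apply n, rfl,
        fun g => NonUnitalAlgebra.subset_adjoin 𝕂 ⟨n, rfl⟩⟩
    | add y z hy hz ihy ihz =>
      obtain ⟨Φ, hc, hfx, hm⟩ := ihy
      obtain ⟨Ψ, hc', hfx', hm'⟩ := ihz
      exact ⟨fun g => Φ g + Ψ g, hc.add hc', by simp only [hfx, hfx'],
        fun g => add_mem (hm g) (hm' g)⟩
    | zero => exact ⟨fun _ => 0, continuous_const, rfl, fun g => zero_mem _⟩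
    | mul y z hy hz ihy ihz =>
      obtain ⟨Φ, hc, hfx, hm⟩ := ihy
      obtain ⟨Ψ, hc', hfx', hm'⟩ := ihz
      exact ⟨fun g => Φ g * Ψ g, hc.mul hc', by simp only [hfx, hfx'],
        fun g => mul_mem (hm g) (hm' g)⟩
    | smul r y hy ihy =>
      obtain ⟨Φ, hc, hfx, hm⟩ := ihy
      exact ⟨fun g => r • Φ g, hc.const_smul r, by simp only [hfx],
        fun g => SMulMemClass.smul_mem r (hm g)⟩
  obtain ⟨Φ, hc, hfx, hm⟩ := key x hx
  refine ⟨Φ ⁻¹' U, fun g hg => ⟨Φ g, hg, hm g⟩, hU.preimage hc, ?_⟩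
  simpa [Set.mem_preimage, hfx] using hxU

/-- The subalgebra (without unit) generated by a sequence, in a separable topological
algebra that is a Baire space with countable base: the set of sequences generating a
dense subalgebra is a dense `Gδ` subset of `X^ℕ`. -/
theorem stmt_5 (𝕂 X : Type*) [RCLike 𝕂] [CommRing X] [Algebra 𝕂 X]
    [TopologicalSpace X] [IsTopologicalRing X] [ContinuousSMul 𝕂 X]
    [BaireSpace X] [SecondCountableTopology X] :
    IsGδ {f : ℕ → X |
        Dense ((NonUnitalAlgebra.adjoin 𝕂 (Set.range f) : NonUnitalSubalgebra 𝕂 X) : Set X)} ∧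
    Dense {f : ℕ → X |
        Dense ((NonUnitalAlgebra.adjoin 𝕂 (Set.range f) : NonUnitalSubalgebra 𝕂 X) : Set X)} := by
  obtain ⟨B, hBc, -, hB⟩ := exists_countable_basis X
  constructor
  · have heq : {f : ℕ → X |
        Dense ((NonUnitalAlgebra.adjoin 𝕂 (Set.range f) : NonUnitalSubalgebra 𝕂 X) : Set X)}
        = ⋂ U ∈ {U ∈ B | U.Nonempty}, {f : ℕ → X |
          (U ∩ ((NonUnitalAlgebra.adjoin 𝕂 (Set.range f) : NonUnitalSubalgebra 𝕂 X) : Set X)).Nonempty} := by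
      ext f
      simp only [Set.mem_setOf_eq, Set.mem_iInter, hB.dense_iff, Set.mem_sep_iff]
      exact ⟨fun h U ⟨hUB, hUne⟩ => h U hUB hUne, fun h U hUB hUne => h U ⟨hUB, hUne⟩⟩
    rw [heq]
    exact IsGδ.biInter (hBc.mono (Set.sep_subset _ _))
      (fun U hU => (aux_open U (hB.isOpen hU.1)).isGδ)
  · rw [dense_iff_inter_open]
    rintro O hO ⟨f, hf⟩
    obtain ⟨I, u, hu, hsub⟩ := isOpen_pi_iff.1 hO f hf
    obtain ⟨d, hd⟩ := TopologicalSpace.exists_dense_seq X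
    set g : ℕ → X := fun n => if n ∈ I then f n else d n.unpair.1 with hg
    have hrange : Set.range d ⊆ Set.range g := by
      rintro x ⟨k, rfl⟩
      refine ⟨Nat.pair k ((I.sup id) + 1), ?_⟩
      have hni : Nat.pair k ((I.sup id) + 1) ∉ I := fun h => by
        have h1 : id (Nat.pair k ((I.sup id) + 1)) ≤ I.sup id := Finset.le_sup h
        have h2 := Nat.right_le_pair k ((I.sup id) + 1)
        simp only [id] at h1
        omega
      simp [hg, hni]
    refine ⟨g, ⟨?_, ?_⟩⟩
    · refine hsub ?_
      intro i hi
      simpa [hg, (Finset.mem_coe.1 hi)] using (hu i hi).2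
    · show Dense _
      refine Dense.mono ?_ (hd.mono hrange)
      exact (NonUnitalAlgebra.subset_adjoin 𝕂 : Set.range g ⊆ _)
end

section
/- Let $X$ be a separable commutative $F$-algebra, $T$ a continuous linear operator on $X$, and $N \geq 2$. Suppose for each nonempty finite set $A \subseteq \mathbb{N}_0^N$ not containing the zero tuple there exists $\beta \in A$ such that for all nonempty open sets $U_1,\dots,U_N,V,W \subseteq X$ with $0 \in W$, there exist $f \in U_1 \times \cdots \times U_N$ and $q \in \mathbb{N}$ with $T^q(f^\beta) \in V$ and $T^q(f^\alpha) \in W$ for all $\alpha \in A \setminus \{\beta\}$. Then the set of $f \in X^N$ that generate a hypercyclic algebra for $T$ is residual in $X^N$. -/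
open TopologicalSpace Set Filter

/-- Sufficient condition for a residual set of tuples generating a hypercyclic algebra. -/
theorem stmt_8 (𝕂 X : Type*) [RCLike 𝕂] [CommRing X] [Algebra 𝕂 X]
    [TopologicalSpace X] [IsTopologicalRing X] [ContinuousSMul 𝕂 X] [PolishSpace X]
    (N : ℕ) (hN : 2 ≤ N) (T : X →L[𝕂] X)
    (hyp : ∀ A : Finset (Fin N → ℕ), A.Nonempty → (0 : Fin N → ℕ) ∉ A →
      ∃ β ∈ A, ∀ (U : Fin N → Set X) (V W : Set X),
        (∀ i, IsOpen (U i)) → (∀ i, (U i).Nonempty) →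
        IsOpen V → V.Nonempty → IsOpen W → (0 : X) ∈ W →
        ∃ f : Fin N → X, (∀ i, f i ∈ U i) ∧ ∃ q : ℕ,
          (T ^ q) (∏ i, f i ^ β i) ∈ V ∧
          ∀ α ∈ A, α ≠ β → (T ^ q) (∏ i, f i ^ α i) ∈ W) :
    {f : Fin N → X | ∀ P : MvPolynomial (Fin N) 𝕂, P ≠ 0 →
        MvPolynomial.constantCoeff P = 0 →
        Dense (Set.range fun n : ℕ => (T ^ n) (MvPolynomial.aeval f P))}
      ∈ residual (Fin N → X) := by
  classical
  choose β hβA hβ using hyp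
  -- extended choice of the dominant exponent
  set β' : Finset (Fin N → ℕ) → (Fin N → ℕ) :=
    fun A => if h : A.Nonempty ∧ (0 : Fin N → ℕ) ∉ A then β A h.1 h.2 else 0 with hβ'def
  -- countable basis
  set B : Set (Set X) := TopologicalSpace.countableBasis X with hBdef
  have hBbasis : IsTopologicalBasis B := TopologicalSpace.isBasis_countableBasis X
  have hBcount : B.Countable := TopologicalSpace.countable_countableBasis X
  -- index set and the open dense sets
  set S : Set (Finset (Fin N → ℕ) × Set X × Set X) :=
    {p | (p.1.Nonempty ∧ (0 : Fin N → ℕ) ∉ p.1) ∧ p.2.1 ∈ B ∧ p.2.1.Nonempty ∧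
      p.2.2 ∈ B ∧ (0 : X) ∈ p.2.2} with hSdef
  set G : Finset (Fin N → ℕ) × Set X × Set X → Set (Fin N → X) :=
    fun p => {f | ∃ q : ℕ, (T ^ q) (∏ i, f i ^ β' p.1 i) ∈ p.2.1 ∧
      ∀ α ∈ p.1, α ≠ β' p.1 → (T ^ q) (∏ i, f i ^ α i) ∈ p.2.2} with hGdef
  have hScount : S.Countable := by
    have : S ⊆ (univ : Set (Finset (Fin N → ℕ))) ×ˢ (B ×ˢ B) := by
      rintro ⟨A, V, W⟩ ⟨_, hV, _, hW, _⟩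
      exact ⟨mem_univ _, hV, hW⟩
    exact (countable_univ.prod (hBcount.prod hBcount)).mono this
  have hcont : ∀ (q : ℕ) (γ : Fin N → ℕ),
      Continuous fun f : Fin N → X => (T ^ q) (∏ i, f i ^ γ i) := by
    intro q γ
    exact (T ^ q).continuous.comp
      (continuous_finset_prod _ fun i _ => (continuous_apply i).pow _)
  -- each G p is open
  have hopen : ∀ p : Finset (Fin N → ℕ) × Set X × Set X,
      IsOpen p.2.1 → IsOpen p.2.2 → IsOpen (G p) := by
    rintro ⟨A, V, W⟩ hV hW
    have hG : G (A, V, W) = ⋃ q : ℕ,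
        ((fun f : Fin N → X => (T ^ q) (∏ i, f i ^ β' A i)) ⁻¹' V ∩
          ⋂ α ∈ A, {f : Fin N → X | α ≠ β' A → (T ^ q) (∏ i, f i ^ α i) ∈ W}) := by
      ext f
      simp only [hGdef, mem_setOf_eq, mem_iUnion, mem_inter_iff, mem_preimage, mem_iInter]
    rw [hG]
    refine isOpen_iUnion fun q => ((hcont q _).isOpen_preimage V hV).inter
      (isOpen_biInter_finset fun α _ => ?_)
    by_cases h : α = β' A
    · have huniv : {f : Fin N → X | α ≠ β' A → (T ^ q) (∏ i, f i ^ α i) ∈ W} = univ := by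
        ext f; simp [h]
      rw [huniv]; exact isOpen_univ
    · have : {f : Fin N → X | α ≠ β' A → (T ^ q) (∏ i, f i ^ α i) ∈ W} =
          (fun f : Fin N → X => (T ^ q) (∏ i, f i ^ α i)) ⁻¹' W := by
        ext f; simp [h]
      rw [this]
      exact (hcont q _).isOpen_preimage W hW
  -- each G p for p ∈ S is dense
  have hdense : ∀ p ∈ S, Dense (G p) := by
    rintro ⟨A, V, W⟩ ⟨⟨hA, h0⟩, hVB, hVne, hWB, hW0⟩
    rw [dense_iff_inter_open]
    rintro U hU ⟨g, hg⟩
    obtain ⟨u, hu, hsub⟩ := isOpen_pi_iff'.1 hU g hg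
    have hβ'A : β' A = β A hA h0 := dif_pos ⟨hA, h0⟩
    obtain ⟨f, hfU, q, hq1, hq2⟩ := hβ A hA h0 u V W (fun i => (hu i).1)
      (fun i => ⟨g i, (hu i).2⟩) (hBbasis.isOpen hVB) hVne (hBbasis.isOpen hWB) hW0
    refine ⟨f, hsub fun i _ => hfU i, q, ?_, ?_⟩
    · rw [hβ'A]; exact hq1
    · rw [hβ'A]; exact hq2
  -- the countable intersection is residual
  have hmem : (⋂ p ∈ S, G p) ∈ residual (Fin N → X) := by
    refine (countable_bInter_mem hScount).2 fun p hp => ?_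
    exact residual_of_dense_open
      (hopen p (hBbasis.isOpen hp.2.1) (hBbasis.isOpen hp.2.2.2.1)) (hdense p hp)
  refine mem_of_superset hmem ?_
  intro f hf P hP hP0
  simp only [mem_iInter] at hf
  -- set up the support data
  set A : Finset (Fin N → ℕ) := P.support.image (fun d : Fin N →₀ ℕ => ⇑d) with hAdef
  have hA : A.Nonempty := by rw [hAdef]; exact (MvPolynomial.support_nonempty.2 hP).image _
  have h0 : (0 : Fin N → ℕ) ∉ A := by
    intro h
    obtain ⟨d, hd, hd0⟩ := Finset.mem_image.1 h
    have : d = 0 := by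
      ext i; exact congrFun hd0 i
    rw [this] at hd
    exact (MvPolynomial.mem_support_iff.1 hd) hP0
  set c : (Fin N → ℕ) → 𝕂 := fun α => P.coeff (Finsupp.equivFunOnFinite.symm α) with hcdef
  have hinj : Set.InjOn (fun d : Fin N →₀ ℕ => (d : Fin N → ℕ)) P.support :=
    fun d _ e _ h => DFunLike.coe_injective h
  have hsum : ∀ g : Fin N → X, (MvPolynomial.aeval g P : X) =
      ∑ α ∈ A, c α • ∏ i, g i ^ α i := by
    intro g
    rw [MvPolynomial.aeval_def, MvPolynomial.eval₂_eq', hAdef, Finset.sum_image hinj]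
    refine Finset.sum_congr rfl fun d _ => ?_
    rw [hcdef]
    simp only [Finsupp.equivFunOnFinite_symm_coe]
    rw [Algebra.smul_def]
  set b : Fin N → ℕ := β' A with hbdef
  have hβ'A : β' A = β A hA h0 := dif_pos ⟨hA, h0⟩
  have hbA : b ∈ A := by rw [hbdef, hβ'A]; exact hβA A hA h0
  have hcb : c b ≠ 0 := by
    obtain ⟨d, hd, hdb⟩ := Finset.mem_image.1 hbA
    have : Finsupp.equivFunOnFinite.symm b = d := by
      rw [← hdb]; exact Finsupp.equivFunOnFinite_symm_coe d
    rw [hcdef]; simp only [this]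
    exact MvPolynomial.mem_support_iff.1 hd
  -- key orbit computation
  have horbit : ∀ q : ℕ, (T ^ q) (MvPolynomial.aeval f P) =
      c b • (T ^ q) (∏ i, f i ^ b i) +
        ∑ α ∈ A.erase b, c α • (T ^ q) (∏ i, f i ^ α i) := by
    intro q
    rw [hsum f, map_sum, ← Finset.add_sum_erase _ _ hbA, map_smul]
    congr 1
    refine Finset.sum_congr rfl fun α _ => ?_
    rw [map_smul]
  rw [dense_iff_inter_open]
  rintro V hV ⟨v, hv⟩
  -- continuity of the recombination map
  set Φ : X × ((Fin N → ℕ) → X) → X :=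
    fun x => c b • x.1 + ∑ α ∈ A.erase b, c α • x.2 α with hΦdef
  have hΦcont : Continuous Φ := by
    refine (continuous_fst.const_smul _).add (continuous_finset_sum _ fun α _ => ?_)
    exact ((continuous_apply α).comp continuous_snd).const_smul _
  have hΦv : Φ ((c b)⁻¹ • v, 0) = v := by
    simp only [hΦdef, Pi.zero_apply, smul_zero, Finset.sum_const_zero, add_zero,
      smul_smul, mul_inv_cancel₀ hcb, one_smul]
  have hmemΦ : ((c b)⁻¹ • v, (0 : (Fin N → ℕ) → X)) ∈ Φ ⁻¹' V := by
    rw [mem_preimage, hΦv]; exact hv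
  obtain ⟨V₁, O, hV₁, hO, hvV₁, h0O, hprod⟩ :=
    isOpen_prod_iff.1 (hΦcont.isOpen_preimage V hV) _ _ hmemΦ
  obtain ⟨I, u, hu, hOsub⟩ := isOpen_pi_iff.1 hO 0 h0O
  set W₀ : Set X := ⋂ i ∈ I, u i with hW₀def
  have hW₀open : IsOpen W₀ := isOpen_biInter_finset fun i hi => (hu i hi).1
  have h0W₀ : (0 : X) ∈ W₀ := mem_iInter₂.2 fun i hi => (hu i hi).2
  obtain ⟨Vb, hVbB, hvVb, hVbsub⟩ := hBbasis.exists_subset_of_mem_open hvV₁ hV₁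
  obtain ⟨Wb, hWbB, h0Wb, hWbsub⟩ := hBbasis.exists_subset_of_mem_open h0W₀ hW₀open
  have hpS : (A, Vb, Wb) ∈ S := ⟨⟨hA, h0⟩, hVbB, ⟨_, hvVb⟩, hWbB, h0Wb⟩
  obtain ⟨q, hq1, hq2⟩ := hf (A, Vb, Wb) hpS
  -- assemble
  set w : (Fin N → ℕ) → X :=
    fun α => if α ∈ A.erase b then (T ^ q) (∏ i, f i ^ α i) else 0 with hwdef
  have hwO : w ∈ O := by
    refine hOsub fun i hi => ?_
    by_cases h : i ∈ A.erase b
    · have hiA := Finset.mem_of_mem_erase h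
      have hib := Finset.ne_of_mem_erase h
      have hwi : w i = (T ^ q) (∏ j, f j ^ i j) := if_pos h
      rw [hwi]
      exact mem_iInter₂.1 (hWbsub (hq2 i hiA hib)) i hi
    · have : w i = 0 := if_neg h
      rw [this]; exact (hu i hi).2
  have hΦval : Φ ((T ^ q) (∏ i, f i ^ b i), w) = (T ^ q) (MvPolynomial.aeval f P) := by
    rw [horbit q, hΦdef]
    simp only
    congr 1
    refine Finset.sum_congr rfl fun α hα => ?_
    rw [hwdef]
    simp only [if_pos hα]
  refine ⟨(T ^ q) (MvPolynomial.aeval f P), ?_, q, rfl⟩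
  rw [← hΦval]
  exact hprod ⟨hVbsub hq1, hwO⟩
end

section
/- Let $T$ be a weakly mixing multiplicative continuous linear operator on a separable commutative $F$-algebra $X$ over $\mathbb{K}$, and let $N \geq 2$. If for each nonzero polynomial $P \in \mathbb{K}[t_1,\dots,t_N]$ with $P(0)=0$ the evaluation map $\widehat{P}: X^N \to X$, $f \mapsto P(f_1,\dots,f_N)$, has dense range, then for each $f \in X^N$ hypercyclic for the $N$-fold direct sum $T \oplus \cdots \oplus T$, the algebra generated by $f_1,\dots,f_N$ consists (except possibly $0$) of hypercyclic vectors for $T$. -/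
open MvPolynomial Finset

section
variable {𝕂 X : Type*} [RCLike 𝕂] [CommRing X] [Algebra 𝕂 X] [TopologicalSpace X] [IsTopologicalRing X] [ContinuousSMul 𝕂 X]

lemma aux_mul_prod (S : X →L[𝕂] X) (hS : ∀ a b : X, S (a * b) = S a * S b)
    {ι : Type*} (s : Finset ι) (g : ι → X) :
    ∀ a : X, S (a * ∏ i ∈ s, g i) = S a * ∏ i ∈ s, S (g i) := by
  induction s using Finset.cons_induction with
  | empty => simp
  | cons j t hj ih =>
      intro a
      rw [Finset.prod_cons, ← mul_assoc, ih, hS, Finset.prod_cons, mul_assoc]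

lemma aux_pow (S : X →L[𝕂] X) (hS : ∀ a b : X, S (a * b) = S a * S b)
    (a : X) : ∀ k : ℕ, k ≠ 0 → S (a ^ k) = S a ^ k := by
  intro k
  induction k with
  | zero => intro h; exact absurd rfl h
  | succ m ih =>
      intro _
      rcases Nat.eq_zero_or_pos m with h | h
      · subst h; simp
      · rw [pow_succ, hS, ih h.ne', pow_succ]

lemma aux_aeval_comm {N : ℕ} (S : X →L[𝕂] X) (hS : ∀ a b : X, S (a * b) = S a * S b)
    (f : Fin N → X) (P : MvPolynomial (Fin N) 𝕂) (hP : constantCoeff P = 0) :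
    S (aeval f P) = aeval (fun i => S (f i)) P := by
  have main : ∀ Q : MvPolynomial (Fin N) 𝕂,
      S (aeval f Q) = aeval (fun i => S (f i)) Q + constantCoeff Q • (S 1 - 1) := by
    intro Q
    induction Q using MvPolynomial.induction_on' with
    | monomial d c =>
        by_cases hd : d = 0
        · subst hd
          simp [Algebra.algebraMap_eq_smul_one, smul_sub]
        · have hd0 : constantCoeff (monomial d c) = (0 : 𝕂) := by
            simp [constantCoeff_monomial, hd]
          rw [hd0, zero_smul, add_zero]
          obtain ⟨i₀, hi₀⟩ := Finsupp.support_nonempty_iff.mpr hd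
          rw [aeval_monomial, aeval_monomial, Finsupp.prod, Finsupp.prod,
            ← Finset.mul_prod_erase _ _ hi₀, ← Finset.mul_prod_erase _ (fun i => S (f i) ^ d i) hi₀]
          rw [← Algebra.smul_def, ← Algebra.smul_def, map_smul, aux_mul_prod S hS,
            aux_pow S hS _ _ (Finsupp.mem_support_iff.mp hi₀)]
          congr 2
          exact Finset.prod_congr rfl fun i hi =>
            aux_pow S hS _ _ (Finsupp.mem_support_iff.mp (Finset.mem_of_mem_erase hi))
    | add p q ihp ihq =>
        simp only [map_add, ihp, ihq, add_smul]
        abel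
  rw [main P, hP, zero_smul, add_zero]


lemma aux_pow_mul (T : X →L[𝕂] X) (hmul : ∀ a b : X, T (a * b) = T a * T b) :
    ∀ n : ℕ, ∀ a b : X, (T ^ n) (a * b) = (T ^ n) a * (T ^ n) b := by
  intro n
  induction n with
  | zero => simp
  | succ m ih =>
      intro a b
      simp only [pow_succ, ContinuousLinearMap.mul_apply, hmul, ih]

lemma aux_cont {N : ℕ} (P : MvPolynomial (Fin N) 𝕂) :
    Continuous fun g : Fin N → X => (aeval g P : X) := by
  have h : (fun g : Fin N → X => (aeval g P : X))
      = fun g => ∑ d ∈ P.support, (algebraMap 𝕂 X) (coeff d P) * ∏ i ∈ d.support, g i ^ d i := by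
    funext g
    rw [aeval_def, eval₂_eq]
  rw [h]
  exact continuous_finset_sum _ fun d _ => continuous_const.mul
    (continuous_finset_prod _ fun i _ => (continuous_apply i).pow _)

end

/-- If every polynomial evaluation map (for polynomials vanishing at the origin) has dense
range, then every vector hypercyclic for the `N`-fold direct sum of a weakly mixing
multiplicative operator generates an algebra consisting (except `0`) of hypercyclic
vectors. -/
theorem stmt_9 (𝕂 X : Type*) [RCLike 𝕂] [CommRing X] [Algebra 𝕂 X]
    [TopologicalSpace X] [IsTopologicalRing X] [ContinuousSMul 𝕂 X] [PolishSpace X]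
    (T : X →L[𝕂] X) (hmul : ∀ a b : X, T (a * b) = T a * T b)
    (hwm : ∃ g : X × X, Dense (Set.range fun n : ℕ => ((T ^ n) g.1, (T ^ n) g.2)))
    (N : ℕ) (hN : 2 ≤ N)
    (hdr : ∀ P : MvPolynomial (Fin N) 𝕂, P ≠ 0 → MvPolynomial.constantCoeff P = 0 →
      DenseRange (fun f : Fin N → X => MvPolynomial.aeval f P)) :
    ∀ f : Fin N → X,
      Dense (Set.range fun n : ℕ => fun i : Fin N => (T ^ n) (f i)) →
      ∀ P : MvPolynomial (Fin N) 𝕂, P ≠ 0 → MvPolynomial.constantCoeff P = 0 →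
        MvPolynomial.aeval f P ≠ 0 →
        Dense (Set.range fun n : ℕ => (T ^ n) (MvPolynomial.aeval f P)) := by
  intro f hf P hP0 hcc _
  have key : (fun n : ℕ => (T ^ n) (MvPolynomial.aeval f P))
      = (fun g : Fin N → X => (MvPolynomial.aeval g P : X)) ∘
        (fun n : ℕ => fun i : Fin N => (T ^ n) (f i)) := by
    funext n
    exact aux_aeval_comm (T ^ n) (aux_pow_mul T hmul n) f P hcc
  rw [key]
  exact (hdr P hP0 hcc).comp hf (aux_cont P)
end

section
/- Let $X$ be a commutative $F$-algebra over $\mathbb{K}$ and $T$ a multiplicative continuous linear operator on $X$ supporting a (singly generated) hypercyclic algebra. Then for every $N \geq 2$ and every nonzero polynomial $P \in \mathbb{K}[t_1,\dots,t_N]$ with $P(0)=0$, the map $\widehat{P}: X^N \to X$, $f \mapsto P(f_1,\dots,f_N)$, has dense range. -/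
/-- If a multiplicative operator on a commutative F-algebra supports a singly generated
hypercyclic algebra, then every nonzero polynomial (in several variables) vanishing at the
origin induces an evaluation map with dense range. -/
theorem stmt_11 (𝕂 X : Type*) [RCLike 𝕂] [CommRing X] [Algebra 𝕂 X]
    [TopologicalSpace X] [IsTopologicalRing X] [ContinuousSMul 𝕂 X] [PolishSpace X]
    (T : X →L[𝕂] X) (hmul : ∀ a b : X, T (a * b) = T a * T b)
    (hhc : ∃ f : X, ∀ p : Polynomial 𝕂, p ≠ 0 → p.coeff 0 = 0 →
      Dense (Set.range fun n : ℕ => (T ^ n) (Polynomial.aeval f p))) :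
    ∀ (N : ℕ), 2 ≤ N → ∀ P : MvPolynomial (Fin N) 𝕂, P ≠ 0 →
      MvPolynomial.constantCoeff P = 0 →
      DenseRange (fun f : Fin N → X => MvPolynomial.aeval f P) := by
  obtain ⟨g, hg⟩ := hhc
  intro N hN P hP hP0
  -- powers of T are multiplicative
  have hpowmul : ∀ n : ℕ, ∀ a b : X, (T ^ n) (a * b) = (T ^ n) a * (T ^ n) b := by
    intro n
    induction n with
    | zero => intro a b; simp
    | succ n ih =>
      intro a b
      rw [pow_succ', ContinuousLinearMap.mul_apply, ContinuousLinearMap.mul_apply,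
        ContinuousLinearMap.mul_apply, ih, hmul]
  have hpowk : ∀ n k : ℕ, ∀ a : X, (T ^ n) (a ^ (k + 1)) = ((T ^ n) a) ^ (k + 1) := by
    intro n k
    induction k with
    | zero => intro a; simp
    | succ k ih =>
      intro a
      rw [pow_succ, hpowmul, ih, ← pow_succ]
  -- choose lam with eval lam P ≠ 0
  have hlam : ∃ lam : Fin N → 𝕂, MvPolynomial.eval lam P ≠ 0 := by
    by_contra h
    push_neg at h
    exact hP (MvPolynomial.funext fun x => by simp [h x])
  obtain ⟨lam, hlam⟩ := hlam
  set q : Polynomial 𝕂 :=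
    MvPolynomial.aeval (fun i => Polynomial.C (lam i) * Polynomial.X) P with hqdef
  -- composition identity
  have hcomp : ∀ h : X, Polynomial.aeval h q = MvPolynomial.aeval (fun i => lam i • h) P := by
    intro h
    rw [hqdef]
    have := MvPolynomial.comp_aeval
      (f := fun i : Fin N => Polynomial.C (lam i) * Polynomial.X)
      (φ := Polynomial.aeval h (R := 𝕂) (A := X))
    have := AlgHom.congr_fun this P
    simp only [AlgHom.coe_comp, Function.comp_apply] at this
    rw [this]
    simp only [map_mul, Polynomial.aeval_C, Polynomial.aeval_X, ← Algebra.smul_def]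
  -- similar over 𝕂 itself
  have hcompK : ∀ c : 𝕂, Polynomial.aeval c q = MvPolynomial.eval (fun i => lam i * c) P := by
    intro c
    rw [hqdef]
    have := MvPolynomial.comp_aeval
      (f := fun i : Fin N => Polynomial.C (lam i) * Polynomial.X)
      (φ := Polynomial.aeval c (R := 𝕂) (A := 𝕂))
    have := AlgHom.congr_fun this P
    simp only [AlgHom.coe_comp, Function.comp_apply] at this
    rw [this]
    simp only [map_mul, Polynomial.aeval_C, Polynomial.aeval_X, Algebra.algebraMap_self,
      RingHom.id_apply]
    exact DFunLike.congr_fun (MvPolynomial.coe_aeval_eq_eval _) P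
  have hq : q ≠ 0 := by
    intro h
    apply hlam
    have := hcompK 1
    rw [h] at this
    simpa using this.symm
  have hq0 : q.coeff 0 = 0 := by
    have := hcompK 0
    rw [← Polynomial.coeff_zero_eq_aeval_zero] at this
    rw [this]
    have : (fun i : Fin N => lam i * 0) = 0 := by funext i; simp
    rw [this]
    simpa using hP0
  -- key identity
  have hkey : ∀ n : ℕ, (T ^ n) (Polynomial.aeval g q)
      = MvPolynomial.aeval (fun i => lam i • (T ^ n) g) P := by
    intro n
    rw [← hcomp ((T ^ n) g)]
    rw [Polynomial.aeval_eq_sum_range (x := g), Polynomial.aeval_eq_sum_range (x := (T ^ n) g),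
      map_sum]
    refine Finset.sum_congr rfl fun k _ => ?_
    rcases k with _ | k
    · simp [hq0]
    · rw [map_smul]
      congr 1
      exact hpowk n k g
  have hd := hg q hq hq0
  refine hd.mono ?_
  rintro _ ⟨n, rfl⟩
  exact ⟨fun i => lam i • (T ^ n) g, (hkey n).symm⟩
end

section
/- Let $X$ be a Baire topological space with countable base $\{V_k\}$, $T$ a continuous map on a commutative $F$-algebra $X$, $N \geq 2$, and suppose $G \subseteq X^N$ is the set of tuples $f$ such that for every finite nonempty $A \subseteq \mathbb{N}_0^N \setminus \{0\}$, some fixed choice $\beta = \beta(A) \in A$, every basic open $V_k$ and every balanced basic neighborhood $W_\ell$ of $0$, there is $q$ with $T^q(f^\beta) \in V_k$ and $T^q(f^\alpha) \in W_\ell$ for $\alpha \in A\setminus\{\beta\}$. Then every $f \in G$ generates a hypercyclic algebra for $T$: for every nonzero polynomial $P = \sum_{\alpha\in A} c_\alpha t^\alpha$ with $P(0)=0$, the element $P(f)$ is hypercyclic for $T$. -/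
/-- Tuples satisfying the approximation condition (for every finite set `A` of
multi-indices avoiding `0` there is a distinguished `β ∈ A` such that for all open `V`
and all balanced open neighborhoods `W` of `0` some iterate sends `f^β` into `V` and all
other powers `f^α`, `α ∈ A`, into `W`) generate a hypercyclic algebra. -/
theorem stmt_17 (𝕂 X : Type*) [RCLike 𝕂] [CommRing X] [Algebra 𝕂 X]
    [TopologicalSpace X] [IsTopologicalRing X] [ContinuousSMul 𝕂 X] [PolishSpace X]
    (T : X →L[𝕂] X) (N : ℕ) (hN : 2 ≤ N) (f : Fin N → X)
    (hf : ∀ A : Finset (Fin N → ℕ), A.Nonempty → (0 : Fin N → ℕ) ∉ A →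
      ∃ β ∈ A, ∀ V W : Set X, IsOpen V → V.Nonempty →
        IsOpen W → (0 : X) ∈ W → Balanced 𝕂 W →
        ∃ q : ℕ, (T ^ q) (∏ i, f i ^ β i) ∈ V ∧
          ∀ α ∈ A, α ≠ β → (T ^ q) (∏ i, f i ^ α i) ∈ W) :
    ∀ P : MvPolynomial (Fin N) 𝕂, P ≠ 0 → MvPolynomial.constantCoeff P = 0 →
      Dense (Set.range fun n : ℕ => (T ^ n) (MvPolynomial.aeval f P)) := by
  classical
  intro P hP h0
  rw [dense_iff_inter_open]
  rintro V hVopen ⟨x, hxV⟩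
  -- The finite set of exponents of `P`, as functions `Fin N → ℕ`.
  set A : Finset (Fin N → ℕ) := Finset.image (fun d : Fin N →₀ ℕ => ⇑d) P.support with hA
  have hAne : A.Nonempty := by
    refine Finset.image_nonempty.2 ?_
    exact MvPolynomial.support_nonempty.2 hP
  have h0A : (0 : Fin N → ℕ) ∉ A := by
    simp only [hA, Finset.mem_image, not_exists]
    rintro d ⟨hd, hd0⟩
    have : d = 0 := DFunLike.coe_injective (by simpa using hd0)
    subst this
    rw [MvPolynomial.mem_support_iff] at hd
    exact hd (by rw [← MvPolynomial.constantCoeff_eq]; exact h0)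
  obtain ⟨β, hβA, hβ⟩ := hf A hAne h0A
  obtain ⟨b, hbsupp, hbβ⟩ := Finset.mem_image.1 hβA
  have hc : P.coeff b ≠ 0 := MvPolynomial.mem_support_iff.1 hbsupp
  -- The continuous "evaluation" map encoding `T^q (P(f))`.
  set F : ((Fin N → ℕ) → X) → X := fun g => ∑ d ∈ P.support, P.coeff d • g d with hF
  have hFcont : Continuous F := by
    refine continuous_finset_sum _ fun d _ => ?_
    exact (continuous_apply ((d : Fin N → ℕ))).const_smul _
  -- Base point with value `x`.
  set g₀ : (Fin N → ℕ) → X := fun α => if α = β then (P.coeff b)⁻¹ • x else 0 with hg₀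
  have hFg₀ : F g₀ = x := by
    simp only [hF]
    rw [Finset.sum_eq_single b]
    · simp only [hg₀, hbβ, if_pos rfl, smul_smul, mul_inv_cancel₀ hc, one_smul]
    · intro d hd hdb
      have : (d : Fin N → ℕ) ≠ β := fun h => hdb (DFunLike.coe_injective (h.trans hbβ.symm))
      simp [hg₀, this]
    · intro h; exact absurd hbsupp h
  -- The preimage of `V` is open in the product topology; extract a basic open set.
  have hopen : IsOpen (F ⁻¹' V) := hVopen.preimage hFcont
  have hg₀mem : g₀ ∈ F ⁻¹' V := by simp [Set.mem_preimage, hFg₀, hxV]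
  obtain ⟨I, u, hu, hpi⟩ := (isOpen_pi_iff.1 hopen) g₀ hg₀mem
  -- Enlarge so that `β` is among the indices.
  set u' : (Fin N → ℕ) → Set X := fun a => if a ∈ I then u a else Set.univ with hu'
  set I' : Finset (Fin N → ℕ) := insert β I with hI'
  have hu'all : ∀ a ∈ I', IsOpen (u' a) ∧ g₀ a ∈ u' a := by
    intro a _
    by_cases haI : a ∈ I
    · simpa [hu', haI] using hu a haI
    · simp [hu', haI]
  have hpi' : (I' : Set (Fin N → ℕ)).pi u' ⊆ F ⁻¹' V := by
    refine fun g hg => hpi fun a haI => ?_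
    have h2 := hg a (by simp [hI', haI])
    have haI2 : a ∈ I := haI
    have h3 : u' a = u a := if_pos haI2
    rwa [h3] at h2
  -- The open set around `f^β` and the balanced neighborhood of `0`.
  set V' : Set X := u' β with hV'
  have hβI' : β ∈ I' := by simp [hI']
  have hV'open : IsOpen V' := (hu'all β hβI').1
  have hV'ne : V'.Nonempty := ⟨g₀ β, by simpa [hg₀] using (hu'all β hβI').2⟩
  set W₁ : Set X := ⋂ a ∈ I'.erase β, u' a with hW₁
  have hW₁open : IsOpen W₁ := isOpen_biInter_finset fun a ha =>
    (hu'all a (Finset.mem_of_mem_erase ha)).1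
  have hW₁zero : (0 : X) ∈ W₁ := by
    refine Set.mem_biInter fun a ha => ?_
    have haβ : a ≠ β := Finset.ne_of_mem_erase ha
    have := (hu'all a (Finset.mem_of_mem_erase ha)).2
    simpa [hg₀, haβ] using this
  set W : Set X := interior (balancedCore 𝕂 W₁) with hW
  have hWnhds : balancedCore 𝕂 W₁ ∈ nhds (0 : X) :=
    balancedCore_mem_nhds_zero (hW₁open.mem_nhds hW₁zero)
  have hW0 : (0 : X) ∈ W := mem_interior_iff_mem_nhds.2 hWnhds
  have hWbal : Balanced 𝕂 W := (balancedCore_balanced W₁).interior hW0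
  have hWsub : W ⊆ W₁ := interior_subset.trans (balancedCore_subset W₁)
  -- Apply the hypothesis.
  obtain ⟨q, hq1, hq2⟩ := hβ V' W hV'open hV'ne isOpen_interior hW0 hWbal
  -- The candidate point of the orbit.
  set g : (Fin N → ℕ) → X := fun α => if α ∈ A then (T ^ q) (∏ i, f i ^ α i) else 0 with hg
  have hgmem : g ∈ (I' : Set (Fin N → ℕ)).pi u' := by
    intro a haI'
    rcases eq_or_ne a β with rfl | haβ
    · simpa [hg, hβA] using hq1
    · by_cases haA : a ∈ A
      · have hmem : (T ^ q) (∏ i, f i ^ a i) ∈ W := hq2 a haA haβ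
        have : (T ^ q) (∏ i, f i ^ a i) ∈ W₁ := hWsub hmem
        have := Set.mem_iInter₂.1 this a (Finset.mem_erase.2 ⟨haβ, haI'⟩)
        simpa [hg, haA] using this
      · have := (hu'all a haI').2
        simpa [hg, haA, hg₀, haβ] using this
  have hFgV : F g ∈ V := hpi' hgmem
  -- Identify `F g` with `T^q (P(f))`.
  have hFg : F g = (T ^ q) (MvPolynomial.aeval f P) := by
    have haev : MvPolynomial.aeval f P
        = ∑ d ∈ P.support, P.coeff d • ∏ i, f i ^ d i := by
      rw [MvPolynomial.aeval_def, MvPolynomial.eval₂_eq']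
      exact Finset.sum_congr rfl fun d _ => (Algebra.smul_def _ _).symm
    rw [haev, map_sum]
    refine Finset.sum_congr rfl fun d hd => ?_
    have hdA : (d : Fin N → ℕ) ∈ A := Finset.mem_image_of_mem (fun d : Fin N →₀ ℕ => ⇑d) hd
    rw [map_smul]
    simp [hg, hdA]
  exact ⟨F g, hFgV, ⟨q, hFg.symm⟩⟩
end
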